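/- For every γ ≥ 0 there is a constant C_γ > 0 such that the following holds. Let E ⊆ [0,∞) be a finite union of pairwise disjoint nondegenerate compact intervals, and let ∂E denote its finite set of boundary points. Then for every l with 3/4 ≤ l ≤ 5/4 one has ∫_{E Δ [0,l]} t^γ dt ≤ C_γ ( ∫_{[0,1/2] \ E} t^γ dt + ∑_{t ∈ ∂E} t^γ |l − t| ). -/

import Mathlib

open Set

noncomputable section

open MeasureTheory

private lemma rpow_int_Icc {γ : ℝ} (hγ : 0 ≤ γ) (R : ℝ) :
    IntegrableOn (fun t : ℝ => t ^ γ) (Icc 0 R) := by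
  rcases le_or_gt 0 R with hR | hR
  · rw [integrableOn_Icc_iff_integrableOn_Ioc]
    have h := intervalIntegral.intervalIntegrable_rpow' (a := 0) (b := R) (r := γ)
      (by linarith)
    rw [intervalIntegrable_iff, uIoc_of_le hR] at h
    exact h
  · rw [Icc_eq_empty (by linarith)]
    exact integrableOn_empty

private lemma setInt_le {γ : ℝ} (hγ : 0 ≤ γ) {s : Set ℝ} (hs : MeasurableSet s)
    {p q K : ℝ} (hsub : s ⊆ Ioc p q) (hK : 0 ≤ K) (hKb : ∀ t ∈ Ioc p q, t ^ γ ≤ K)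
    (hp : 0 ≤ p) :
    (∫ t in s, t ^ γ) ≤ K * max (q - p) 0 := by
  have hfin : volume s < ⊤ :=
    lt_of_le_of_lt (measure_mono hsub) (by rw [Real.volume_Ioc]; exact ENNReal.ofReal_lt_top)
  have hb := norm_setIntegral_le_of_norm_le_const (μ := volume) (f := fun t : ℝ => t ^ γ) hfin (C := K) ?_
  · have hle : volume s ≤ ENNReal.ofReal (q - p) := by
      rw [← Real.volume_Ioc]; exact measure_mono hsub
    have h2 : (volume s).toReal ≤ max (q - p) 0 := by
      calc (volume s).toReal ≤ (ENNReal.ofReal (q - p)).toReal :=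
            ENNReal.toReal_mono ENNReal.ofReal_ne_top hle
        _ = max (q - p) 0 := ENNReal.toReal_ofReal'
    calc (∫ t in s, t ^ γ) ≤ ‖∫ t in s, t ^ γ‖ := by
          rw [Real.norm_eq_abs]; exact le_abs_self _
      _ ≤ K * (volume s).toReal := hb
      _ ≤ K * max (q - p) 0 := mul_le_mul_of_nonneg_left h2 hK
  · intro x hx
    have hx0 : 0 ≤ x := le_trans hp (le_of_lt (hsub hx).1)
    rw [Real.norm_eq_abs, abs_of_nonneg (Real.rpow_nonneg hx0 γ)]
    exact hKb x (hsub hx)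


/-- One-dimensional lemma: for a finite union `E` of pairwise disjoint nondegenerate
compact intervals in `[0, ∞)` and `3/4 ≤ l ≤ 5/4`,
`∫_{E Δ [0,l]} t^γ dt ≤ C_γ (∫_{[0,1/2] \ E} t^γ dt + ∑_{t ∈ ∂E} t^γ |l − t|)`. -/
theorem stmt_15 (γ : ℝ) (hγ : 0 ≤ γ) :
    ∃ C : ℝ, 0 < C ∧
      ∀ (m : ℕ) (a b : Fin m → ℝ),
        (∀ i, 0 ≤ a i ∧ a i < b i) →
        (Pairwise fun i j => Disjoint (Icc (a i) (b i)) (Icc (a j) (b j))) →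
        ∀ E : Set ℝ, E = ⋃ i, Icc (a i) (b i) →
        ∀ l : ℝ, 3 / 4 ≤ l → l ≤ 5 / 4 →
          (∫ t in symmDiff E (Icc 0 l), t ^ γ) ≤
            C * ((∫ t in Icc 0 (1 / 2) \ E, t ^ γ) +
              ∑ᶠ t ∈ frontier E, t ^ γ * |l - t|) := by
  classical
  set M : ℝ := (5 / 4 : ℝ) ^ γ with hMdef
  have hM0 : 0 < M := Real.rpow_pos_of_pos (by norm_num) γ
  have h4a : (0:ℝ) < (4:ℝ) ^ (γ + 1) := Real.rpow_pos_of_pos (by norm_num) _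
  have h4b : (0:ℝ) < (4:ℝ) ^ γ := Real.rpow_pos_of_pos (by norm_num) _
  refine ⟨1 + M * (4:ℝ) ^ (γ + 1) + M * (4:ℝ) ^ γ, by positivity, ?_⟩
  intro m a b hab hdisj E hE l hl1 hl2
  have hEmeas : MeasurableSet E := by
    rw [hE]; exact MeasurableSet.iUnion fun i => measurableSet_Icc
  have hEclosed : IsClosed E := by
    rw [hE]; exact isClosed_iUnion_of_finite fun i => isClosed_Icc
  have hEpos : ∀ t ∈ E, (0:ℝ) ≤ t := by
    rw [hE]
    intro t ht
    simp only [mem_iUnion, mem_Icc] at ht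
    obtain ⟨i, h1, _⟩ := ht
    exact le_trans (hab i).1 h1
  have hbE : ∀ i, b i ∈ E := fun i => by
    rw [hE]; exact mem_iUnion.2 ⟨i, ⟨le_of_lt (hab i).2, le_refl _⟩⟩
  have hb0 : ∀ i, 0 ≤ b i := fun i => le_trans (hab i).1 (le_of_lt (hab i).2)
  -- each b i is a frontier point
  have hbfr : ∀ i, b i ∈ frontier E := by
    intro i
    have key : ∀ x, b i < x → x ∈ E → ∃ j, b i < a j ∧ a j ≤ x := by
      intro x hx hxE
      rw [hE] at hxE
      simp only [mem_iUnion, mem_Icc] at hxE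
      obtain ⟨j, h1, h2⟩ := hxE
      rcases le_or_gt (a j) (b i) with hc | hc
      · exfalso
        have hji : j ≠ i := by
          rintro rfl; exact absurd h2 (not_le.2 hx)
        have hd := hdisj hji
        have : b i ∈ Icc (a j) (b j) ∩ Icc (a i) (b i) :=
          ⟨⟨hc, le_trans (le_of_lt hx) h2⟩, ⟨le_of_lt (hab i).2, le_refl _⟩⟩
        exact (Set.disjoint_left.1 hd) this.1 this.2
      · exact ⟨j, hc, h1⟩
    have hgap : ∃ δ > 0, ∀ x ∈ Ioo (b i) (b i + δ), x ∉ E := by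
      set F := (Finset.univ.filter fun j => b i < a j).image a with hF
      by_cases hne : F.Nonempty
      · refine ⟨F.min' hne - b i, ?_, ?_⟩
        · have hmem : F.min' hne ∈ (Finset.univ.filter fun j => b i < a j).image a :=
            F.min'_mem hne
          simp only [Finset.mem_image, Finset.mem_filter] at hmem
          obtain ⟨j, ⟨_, hj⟩, hj'⟩ := hmem
          have hlt : b i < F.min' hne := lt_of_lt_of_le hj (le_of_eq hj')
          linarith
        · rintro x ⟨hx1, hx2⟩ hxE
          obtain ⟨j, hj1, hj2⟩ := key x hx1 hxE
          have haF : a j ∈ F := by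
            rw [hF]
            simp only [Finset.mem_image, Finset.mem_filter]
            exact ⟨j, ⟨Finset.mem_univ j, hj1⟩, rfl⟩
          have := F.min'_le _ haF
          linarith
      · refine ⟨1, one_pos, ?_⟩
        rintro x ⟨hx1, _⟩ hxE
        obtain ⟨j, hj1, _⟩ := key x hx1 hxE
        exact hne ⟨a j, by
          rw [hF]
          simp only [Finset.mem_image, Finset.mem_filter]
          exact ⟨j, ⟨Finset.mem_univ j, hj1⟩, rfl⟩⟩
    obtain ⟨δ, hδ0, hδ⟩ := hgap
    constructor
    · exact subset_closure (hbE i)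
    · intro hint
      obtain ⟨ε, hε, hball⟩ := Metric.isOpen_iff.1 isOpen_interior (b i) hint
      have hmin : 0 < min ε δ := lt_min hε hδ0
      have hxball : b i + min ε δ / 2 ∈ Metric.ball (b i) ε := by
        rw [Metric.mem_ball, Real.dist_eq]
        rw [abs_of_nonneg (by linarith)]
        have : min ε δ ≤ ε := min_le_left _ _
        linarith
      have hxE : b i + min ε δ / 2 ∈ E := interior_subset (hball hxball)
      refine hδ _ ⟨by linarith, ?_⟩ hxE
      have : min ε δ ≤ δ := min_le_right _ _
      linarith
  -- frontier is finite
  have hfrsub : frontier E ⊆ range a ∪ range b := by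
    intro t ht
    have htE : t ∈ E := hEclosed.frontier_subset ht
    rw [hE] at htE
    simp only [mem_iUnion, mem_Icc] at htE
    obtain ⟨i, h1, h2⟩ := htE
    rcases eq_or_lt_of_le h1 with h | h
    · exact Or.inl ⟨i, h⟩
    rcases eq_or_lt_of_le h2 with h' | h'
    · exact Or.inr ⟨i, h'.symm⟩
    exfalso
    refine ht.2 (mem_interior.2 ⟨Ioo (a i) (b i), ?_, isOpen_Ioo, ⟨h, h'⟩⟩)
    rw [hE]
    exact Set.Subset.trans Ioo_subset_Icc_self (subset_iUnion (fun i => Icc (a i) (b i)) i)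
  have hfr_fin : (frontier E).Finite :=
    Set.Finite.subset ((finite_range a).union (finite_range b)) hfrsub
  -- injectivity of b
  have hbinj : Function.Injective b := by
    intro i j hij
    by_contra hne
    have hd := hdisj hne
    have h1 : b i ∈ Icc (a i) (b i) := ⟨le_of_lt (hab i).2, le_refl _⟩
    have h2 : b i ∈ Icc (a j) (b j) := ⟨hij ▸ le_of_lt (hab j).2, le_of_eq hij⟩
    exact (Set.disjoint_left.1 hd) h1 h2
  -- the frontier sum
  set g : ℝ → ℝ := fun t => t ^ γ * |l - t| with hgdef
  have hg0 : ∀ t, t ∈ E → 0 ≤ g t := fun t ht =>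
    mul_nonneg (Real.rpow_nonneg (hEpos t ht) γ) (abs_nonneg _)
  set S : ℝ := ∑ᶠ t ∈ frontier E, g t with hSdef
  have hSfin : S = ∑ t ∈ hfr_fin.toFinset, g t := by
    rw [hSdef, ← finsum_mem_coe_finset, hfr_fin.coe_toFinset]
  have hsum_le : ∑ i, g (b i) ≤ S := by
    rw [hSfin]
    have himg : ∑ i, g (b i) = ∑ t ∈ Finset.univ.image b, g t :=
      (Finset.sum_image (fun x _ y _ h => hbinj h)).symm
    rw [himg]
    apply Finset.sum_le_sum_of_subset_of_nonneg
    · intro t ht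
      simp only [Finset.mem_image] at ht
      obtain ⟨i, _, rfl⟩ := ht
      exact hfr_fin.mem_toFinset.2 (hbfr i)
    · intro t ht _
      exact hg0 t (hEclosed.frontier_subset (hfr_fin.mem_toFinset.1 ht))
  have hS0 : 0 ≤ S := by
    rw [hSfin]
    exact Finset.sum_nonneg fun t ht =>
      hg0 t (hEclosed.frontier_subset (hfr_fin.mem_toFinset.1 ht))
  -- integrability
  have hIntE : IntegrableOn (fun t : ℝ => t ^ γ) E := by
    rw [hE]
    refine integrableOn_finite_iUnion.2 fun i => ?_
    exact (rpow_int_Icc hγ (b i)).mono_set (Icc_subset_Icc (hab i).1 (le_refl _))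
  have hInt1 : IntegrableOn (fun t : ℝ => t ^ γ) (Icc 0 (1/2) \ E) :=
    (rpow_int_Icc hγ (1/2)).mono_set diff_subset
  set I1 : ℝ := ∫ t in Icc 0 (1/2) \ E, t ^ γ with hI1def
  have hI10 : 0 ≤ I1 :=
    setIntegral_nonneg (measurableSet_Icc.diff hEmeas) fun x hx =>
      Real.rpow_nonneg hx.1.1 γ
  -- split the symmetric difference
  have hsymm : symmDiff E (Icc 0 l) = (E \ Icc 0 l) ∪ (Icc 0 l \ E) := by
    rw [Set.symmDiff_def]
  have hsplit1 : (∫ t in symmDiff E (Icc 0 l), t ^ γ)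
      = (∫ t in E \ Icc 0 l, t ^ γ) + ∫ t in Icc 0 l \ E, t ^ γ := by
    rw [hsymm]
    exact setIntegral_union disjoint_sdiff_sdiff (measurableSet_Icc.diff hEmeas)
      (hIntE.mono_set diff_subset) ((rpow_int_Icc hγ l).mono_set diff_subset)
  -- term D
  have hD : (∫ t in E \ Icc 0 l, t ^ γ) ≤ ∑ i, g (b i) := by
    have hEdiff : E \ Icc 0 l = ⋃ i, (Icc (a i) (b i) \ Icc 0 l) := by
      rw [hE, iUnion_diff]
    rw [hEdiff, integral_iUnion (fun i => measurableSet_Icc.diff measurableSet_Icc)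
      (hdisj.mono fun i j h => h.mono diff_subset diff_subset)
      (by rw [← hEdiff]; exact hIntE.mono_set diff_subset), tsum_fintype]
    apply Finset.sum_le_sum
    intro i _
    have hsub : Icc (a i) (b i) \ Icc 0 l ⊆ Ioc l (b i) := by
      rintro x ⟨⟨hx1, hx2⟩, hx3⟩
      refine ⟨?_, hx2⟩
      by_contra h
      push_neg at h
      exact hx3 ⟨le_trans (hab i).1 hx1, h⟩
    have hbd := setInt_le hγ (measurableSet_Icc.diff measurableSet_Icc) hsub
      (Real.rpow_nonneg (hb0 i) γ)
      (fun t ht => Real.rpow_le_rpow (le_trans (by linarith) (le_of_lt ht.1)) ht.2 hγ)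
      (by linarith)
    refine le_trans hbd ?_
    rw [hgdef]
    apply mul_le_mul_of_nonneg_left _ (Real.rpow_nonneg (hb0 i) γ)
    rw [abs_sub_comm]
    exact max_le (le_abs_self _) (abs_nonneg _)
  -- split [0,l] \ E
  have hsplit2 : (∫ t in Icc 0 l \ E, t ^ γ)
      = I1 + ∫ t in Ioc (1/2) l \ E, t ^ γ := by
    have hIcc : Icc (0:ℝ) l = Icc 0 (1/2) ∪ Ioc (1/2) l :=
      (Icc_union_Ioc_eq_Icc (by norm_num) (by linarith)).symm
    rw [hIcc, Set.union_diff_distrib]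
    refine setIntegral_union ?_ (measurableSet_Ioc.diff hEmeas) hInt1
      (((rpow_int_Icc hγ l).mono_set
        (fun x hx => ⟨le_trans (by norm_num : (0:ℝ) ≤ 1/2) (le_of_lt hx.1), hx.2⟩)).mono_set
        diff_subset)
    exact Disjoint.mono diff_subset diff_subset
      (Set.disjoint_left.2 fun x hx hx' => absurd hx.2 (not_le.2 hx'.1))
  -- bound for the middle piece, two cases
  have hmid : (∫ t in Ioc (1/2) l \ E, t ^ γ)
      ≤ M * (4:ℝ) ^ (γ + 1) * I1 + M * (4:ℝ) ^ γ * S := by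
    have hKb : ∀ t ∈ Ioc (1/2 : ℝ) l, t ^ γ ≤ M := fun t ht =>
      Real.rpow_le_rpow (by linarith [ht.1]) (by linarith [ht.2]) hγ
    by_cases hc : ∃ i, a i ≤ 1/2 ∧ 1/4 ≤ b i
    · -- case 2: a boundary point in [1/4, ∞) controls everything
      obtain ⟨i₀, hi1, hi2⟩ := hc
      have hsub : Ioc (1/2) l \ E ⊆ Ioc (b i₀) l := by
        rintro x ⟨⟨hx1, hx2⟩, hx3⟩
        refine ⟨?_, hx2⟩
        by_contra h
        push_neg at h
        exact hx3 (hE ▸ mem_iUnion.2 ⟨i₀, ⟨le_trans hi1 (le_of_lt hx1), h⟩⟩)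
      have hbd := setInt_le hγ (measurableSet_Ioc.diff hEmeas)
        (fun x hx => (hsub hx)) (le_of_lt hM0)
        (fun t ht => Real.rpow_le_rpow
          (le_trans (hb0 i₀) (le_of_lt ht.1)) (by linarith [ht.2]) hγ)
        (hb0 i₀)
      have hone : (1:ℝ) ≤ (4:ℝ) ^ γ * (b i₀) ^ γ := by
        have h4b4 : (1:ℝ) ≤ 4 * b i₀ := by linarith
        calc (1:ℝ) = (1:ℝ) ^ γ := (Real.one_rpow γ).symm
          _ ≤ (4 * b i₀) ^ γ := Real.rpow_le_rpow (by norm_num) h4b4 hγ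
          _ = (4:ℝ) ^ γ * (b i₀) ^ γ := Real.mul_rpow (by norm_num) (hb0 i₀)
      have hgle : g (b i₀) ≤ S := by
        refine le_trans ?_ hsum_le
        exact Finset.single_le_sum (f := fun i => g (b i))
          (fun i _ => hg0 _ (hbE i)) (Finset.mem_univ i₀)
      have h1 : max (l - b i₀) 0 ≤ |l - b i₀| :=
        max_le (le_abs_self _) (abs_nonneg _)
      have h2 : |l - b i₀| ≤ (4:ℝ) ^ γ * ((b i₀) ^ γ * |l - b i₀|) := by
        rw [← mul_assoc]
        nlinarith [abs_nonneg (l - b i₀)]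
      calc (∫ t in Ioc (1/2) l \ E, t ^ γ) ≤ M * max (l - b i₀) 0 := hbd
        _ ≤ M * ((4:ℝ) ^ γ * ((b i₀) ^ γ * |l - b i₀|)) := by
            apply mul_le_mul_of_nonneg_left (le_trans h1 h2) (le_of_lt hM0)
        _ = M * (4:ℝ) ^ γ * g (b i₀) := by rw [hgdef]; ring
        _ ≤ M * (4:ℝ) ^ γ * S := by
            apply mul_le_mul_of_nonneg_left hgle (by positivity)
        _ ≤ M * (4:ℝ) ^ (γ + 1) * I1 + M * (4:ℝ) ^ γ * S := by
            have hpos : 0 ≤ M * (4:ℝ) ^ (γ + 1) * I1 := by positivity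
            linarith
    · -- case 1: [1/4,1/2] ⊆ [0,1/2] \ E
      push_neg at hc
      have hsub14 : Icc (1/4 : ℝ) (1/2) ⊆ Icc 0 (1/2) \ E := by
        intro x hx
        refine ⟨⟨by linarith [hx.1], hx.2⟩, ?_⟩
        intro hxE
        rw [hE] at hxE
        simp only [mem_iUnion, mem_Icc] at hxE
        obtain ⟨i, h1, h2⟩ := hxE
        have := hc i (by linarith [hx.2])
        linarith [hx.1]
      have hlow : (1/4:ℝ) ^ γ * (1/4) ≤ I1 := by
        have hmono : (∫ t in Icc (1/4:ℝ) (1/2), t ^ γ) ≤ I1 := by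
          refine setIntegral_mono_set hInt1 ?_ (HasSubset.Subset.eventuallyLE hsub14)
          exact ae_restrict_of_forall_mem (measurableSet_Icc.diff hEmeas)
            fun x hx => Real.rpow_nonneg hx.1.1 γ
        refine le_trans ?_ hmono
        have hconst := setIntegral_mono_on (μ := volume)
          (f := fun _ : ℝ => (1/4:ℝ) ^ γ) (g := fun t : ℝ => t ^ γ)
          (s := Icc (1/4:ℝ) (1/2))
          (integrableOn_const (by rw [Real.volume_Icc]; exact ENNReal.ofReal_ne_top))
          ((rpow_int_Icc hγ (1/2)).mono_set (Icc_subset_Icc (by norm_num) (le_refl _)))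
          measurableSet_Icc
          (fun x hx => Real.rpow_le_rpow (by norm_num) hx.1 hγ)
        rw [setIntegral_const, measureReal_def, Real.volume_Icc, smul_eq_mul,
          ENNReal.toReal_ofReal (by norm_num)] at hconst
        calc (1/4:ℝ) ^ γ * (1/4)
            = (1/2 - 1/4 : ℝ) * (1/4:ℝ) ^ γ := by ring
          _ ≤ ∫ t in Icc (1/4:ℝ) (1/2), t ^ γ := hconst
      have hMle : M * max (l - 1/2) 0 ≤ M * (4:ℝ) ^ (γ + 1) * I1 := by
        have hmax : max (l - 1/2) 0 ≤ 1 := max_le (by linarith) zero_le_one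
        have hkey : (1:ℝ) ≤ (4:ℝ) ^ (γ + 1) * I1 := by
          have : (4:ℝ) ^ (γ + 1) = (4:ℝ) ^ γ * 4 := by
            rw [Real.rpow_add (by norm_num), Real.rpow_one]
          rw [this]
          have h14 : (4:ℝ) ^ γ * (1/4:ℝ) ^ γ = 1 := by
            rw [← Real.mul_rpow (by norm_num) (by norm_num)]
            norm_num
          calc (1:ℝ) = (4:ℝ) ^ γ * ((1/4:ℝ) ^ γ * (1/4)) * 4 := by
                rw [← mul_assoc, h14]; ring
            _ ≤ (4:ℝ) ^ γ * I1 * 4 := by nlinarith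
            _ = (4:ℝ) ^ γ * 4 * I1 := by ring
        calc M * max (l - 1/2) 0 ≤ M * 1 := mul_le_mul_of_nonneg_left hmax (le_of_lt hM0)
          _ = M := mul_one M
          _ ≤ M * ((4:ℝ) ^ (γ + 1) * I1) := le_mul_of_one_le_right (le_of_lt hM0) hkey
          _ = M * (4:ℝ) ^ (γ + 1) * I1 := by ring
      have hbd := setInt_le hγ (measurableSet_Ioc.diff hEmeas)
        (diff_subset : Ioc (1/2:ℝ) l \ E ⊆ Ioc (1/2:ℝ) l) (le_of_lt hM0) hKb (by norm_num)
      refine le_trans (le_trans hbd hMle) ?_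
      have hpos : 0 ≤ M * (4:ℝ) ^ γ * S := by positivity
      linarith
  -- assemble
  rw [hsplit1, hsplit2]
  have hD' : (∫ t in E \ Icc 0 l, t ^ γ) ≤ S := le_trans hD hsum_le
  nlinarith [mul_nonneg (mul_nonneg hM0.le h4b.le) hI10,
    mul_nonneg (mul_nonneg hM0.le h4a.le) hS0,
    mul_nonneg (mul_nonneg hM0.le h4b.le) hS0,
    mul_nonneg (mul_nonneg hM0.le h4a.le) hI10]
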